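/- Every finite solvable group of derived length at most 3 satisfies k(G) ≥ |G|^(1/7), where k(G) is the number of conjugacy classes (Bertram's theorem). -/

import Mathlib

open scoped commutatorElement

/-- The number of conjugacy classes of a quotient is at most that of the group. -/
lemma kQuot_le (G : Type*) [Group G] [Finite G] (N : Subgroup G) [N.Normal] :
    Nat.card (ConjClasses (G ⧸ N)) ≤ Nat.card (ConjClasses G) :=
  Nat.card_le_card_of_surjective (ConjClasses.map (QuotientGroup.mk' N))
    (ConjClasses.map_surjective (QuotientGroup.mk'_surjective N))

/-- For an abelian normal subgroup `N`, `|N| ≤ k(G) * |G/N|`. -/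
lemma cardN_le (G : Type*) [Group G] [Finite G] (N : Subgroup G) [hN : N.Normal]
    (hab : ∀ a b : G, a ∈ N → b ∈ N → a * b = b * a) :
    Nat.card N ≤ Nat.card (ConjClasses G) * Nat.card (G ⧸ N) := by
  rw [← Nat.card_prod]
  have key : ∀ n : N, ∃ g : G,
      g * Quotient.out (ConjClasses.mk (n : G)) * g⁻¹ = (n : G) := by
    intro n
    have h1 : ConjClasses.mk (Quotient.out (ConjClasses.mk (n : G)))
        = ConjClasses.mk (n : G) := by
      exact Quotient.out_eq _
    exact isConj_iff.mp (ConjClasses.mk_eq_mk_iff_isConj.mp h1)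
  refine Nat.card_le_card_of_injective
    (fun n : N => (ConjClasses.mk (n : G),
      (QuotientGroup.mk (Classical.choose (key n)) : G ⧸ N))) ?_
  intro n₁ n₂ hpair
  have hfst : ConjClasses.mk (n₁ : G) = ConjClasses.mk (n₂ : G) :=
    congrArg Prod.fst hpair
  have hsnd : (QuotientGroup.mk (Classical.choose (key n₁)) : G ⧸ N)
      = QuotientGroup.mk (Classical.choose (key n₂)) := congrArg Prod.snd hpair
  set r : G := Quotient.out (ConjClasses.mk (n₁ : G)) with hr
  set g₁ : G := Classical.choose (key n₁) with hg₁def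
  set g₂ : G := Classical.choose (key n₂) with hg₂def
  have hg₁ : g₁ * r * g₁⁻¹ = (n₁ : G) := Classical.choose_spec (key n₁)
  have hg₂ : g₂ * Quotient.out (ConjClasses.mk (n₂ : G)) * g₂⁻¹ = (n₂ : G) :=
    Classical.choose_spec (key n₂)
  rw [← hfst] at hg₂
  have hm : g₁⁻¹ * g₂ ∈ N := (QuotientGroup.eq ).mp hsnd
  have hrN : r ∈ N := by
    have : r = g₁⁻¹ * (n₁ : G) * (g₁⁻¹)⁻¹ := by
      rw [← hg₁]; group
    rw [this]
    exact hN.conj_mem _ n₁.2 _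
  have hcomm : (g₁⁻¹ * g₂) * r = r * (g₁⁻¹ * g₂) := hab _ _ hm hrN
  have : (n₂ : G) = (n₁ : G) := by
    have hg2eq : g₂ = g₁ * (g₁⁻¹ * g₂) := by group
    calc (n₂ : G) = g₂ * r * g₂⁻¹ := hg₂.symm
      _ = g₁ * ((g₁⁻¹ * g₂) * r * (g₁⁻¹ * g₂)⁻¹) * g₁⁻¹ := by
          rw [hg2eq]; group
      _ = g₁ * (r * (g₁⁻¹ * g₂) * (g₁⁻¹ * g₂)⁻¹) * g₁⁻¹ := by rw [hcomm]
      _ = g₁ * r * g₁⁻¹ := by group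
      _ = (n₁ : G) := hg₁
  exact Subtype.ext this.symm

/-- In a commutative finite group, the number of conjugacy classes is at least
the cardinality. -/
lemma card_le_k_of_comm (G : Type*) [Group G] [Finite G]
    (hc : ∀ a b : G, a * b = b * a) :
    Nat.card G ≤ Nat.card (ConjClasses G) := by
  refine Nat.card_le_card_of_injective ConjClasses.mk ?_
  intro a b hab
  obtain ⟨c, hc'⟩ := isConj_iff.mp (ConjClasses.mk_eq_mk_iff_isConj.mp hab)
  rw [← hc', hc c a, mul_assoc, mul_inv_cancel, mul_one]

/-- The quotient by the commutator subgroup is commutative. -/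
lemma quot_commutator_comm (G : Type*) [Group G] :
    ∀ a b : G ⧸ commutator G, a * b = b * a := by
  intro a b
  induction a using QuotientGroup.induction_on with
  | H x =>
    induction b using QuotientGroup.induction_on with
    | H y =>
      rw [← QuotientGroup.mk_mul, ← QuotientGroup.mk_mul, QuotientGroup.eq]
      have : (x * y)⁻¹ * (y * x) = ⁅y⁻¹, x⁻¹⁆ := by group
      rw [this, commutator_def]
      exact Subgroup.commutator_mem_commutator (Subgroup.mem_top _) (Subgroup.mem_top _)

/-- Metabelian case: `|Q| ≤ k(Q)^3`. -/
lemma meta_bound (Q : Type*) [Group Q] [Finite Q] (h2 : derivedSeries Q 2 = ⊥) :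
    Nat.card Q ≤ Nat.card (ConjClasses Q) ^ 3 := by
  have hM : derivedSeries Q 2 = ⁅commutator Q, commutator Q⁆ := by
    rw [derivedSeries_succ, derivedSeries_one]
  have hMab : ∀ a b : Q, a ∈ commutator Q → b ∈ commutator Q → a * b = b * a := by
    intro a b ha hb
    have : ⁅a, b⁆ ∈ (⊥ : Subgroup Q) := by
      rw [← h2, hM]; exact Subgroup.commutator_mem_commutator ha hb
    have h1 : ⁅a, b⁆ = 1 := Subgroup.mem_bot.mp this
    exact commutatorElement_eq_one_iff_mul_comm.mp h1
  have hB := cardN_le Q (commutator Q) hMab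
  have hA := kQuot_le Q (commutator Q)
  have hC : Nat.card (Q ⧸ commutator Q) ≤ Nat.card (ConjClasses (Q ⧸ commutator Q)) :=
    card_le_k_of_comm _ (quot_commutator_comm Q)
  have hL : Nat.card Q = Nat.card (Q ⧸ commutator Q) * Nat.card (commutator Q) :=
    Subgroup.card_eq_card_quotient_mul_card_subgroup (commutator Q)
  set k := Nat.card (ConjClasses Q)
  set q := Nat.card (Q ⧸ commutator Q)
  have hq : q ≤ k := le_trans hC hA
  calc Nat.card Q = q * Nat.card (commutator Q) := hL
    _ ≤ q * (k * q) := Nat.mul_le_mul_left q hB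
    _ = k * (q * q) := by ring
    _ ≤ k * (k * k) := Nat.mul_le_mul_left k (Nat.mul_le_mul hq hq)
    _ = k ^ 3 := by ring

/-- Bertram's theorem: a finite solvable group of derived length at most 3
satisfies `k(G) ≥ |G|^(1/7)`. -/
theorem stmt9 (G : Type*) [Group G] [Finite G] (h : derivedSeries G 3 = ⊥) :
    (Nat.card (ConjClasses G) : ℝ) ≥ (Nat.card G : ℝ) ^ ((1 : ℝ) / 7) := by
  set N := derivedSeries G 2 with hNdef
  haveI : N.Normal := derivedSeries_normal G 2
  have hNab : ∀ a b : G, a ∈ N → b ∈ N → a * b = b * a := by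
    intro a b ha hb
    have : ⁅a, b⁆ ∈ (⊥ : Subgroup G) := by
      rw [← h, derivedSeries_succ]
      exact Subgroup.commutator_mem_commutator ha hb
    exact commutatorElement_eq_one_iff_mul_comm.mp (Subgroup.mem_bot.mp this)
  have hQ2 : derivedSeries (G ⧸ N) 2 = ⊥ := by
    rw [← map_derivedSeries_eq (QuotientGroup.mk'_surjective N) 2,
      Subgroup.map_eq_bot_iff, QuotientGroup.ker_mk']
  have hm := meta_bound (G ⧸ N) hQ2
  have hA := kQuot_le G N
  have hB := cardN_le G N hNab
  have hL : Nat.card G = Nat.card (G ⧸ N) * Nat.card N :=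
    Subgroup.card_eq_card_quotient_mul_card_subgroup N
  set k := Nat.card (ConjClasses G) with hk
  set q := Nat.card (G ⧸ N)
  have hq : q ≤ k ^ 3 :=
    le_trans hm (Nat.pow_le_pow_left hA 3)
  have hnat : Nat.card G ≤ k ^ 7 := by
    calc Nat.card G = q * Nat.card N := hL
      _ ≤ q * (k * q) := Nat.mul_le_mul_left q hB
      _ = k * (q * q) := by ring
      _ ≤ k * (k ^ 3 * k ^ 3) := Nat.mul_le_mul_left k (Nat.mul_le_mul hq hq)
      _ = k ^ 7 := by ring
  have hkreal : (Nat.card G : ℝ) ≤ (k : ℝ) ^ (7 : ℕ) := by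
    exact_mod_cast hnat
  have hknn : (0 : ℝ) ≤ (k : ℝ) := Nat.cast_nonneg k
  have step : (Nat.card G : ℝ) ^ ((1 : ℝ) / 7) ≤ ((k : ℝ) ^ (7 : ℕ)) ^ ((1 : ℝ) / 7) :=
    Real.rpow_le_rpow (Nat.cast_nonneg _) hkreal (by norm_num)
  have hpow : ((k : ℝ) ^ (7 : ℕ)) ^ ((1 : ℝ) / 7) = (k : ℝ) := by
    rw [← Real.rpow_natCast (k : ℝ) 7, ← Real.rpow_mul hknn]
    norm_num
  rw [ge_iff_le]
  calc (Nat.card G : ℝ) ^ ((1 : ℝ) / 7) ≤ ((k : ℝ) ^ (7 : ℕ)) ^ ((1 : ℝ) / 7) := step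
    _ = (k : ℝ) := hpow
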